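/- arXiv:2001.08074 — 3 statements merged into one kernel-verified Lean document; each statement's English description precedes it below -/
import Mathlib

section
/- In the 3-regular tree, every finite nonempty set of vertices V satisfies #∂V ≥ #V, where ∂V denotes the vertex boundary of V, i.e., the set of vertices outside V adjacent to at least one vertex of V. -/
open SimpleGraph Set

section helpers

variable {V : Type*} {G : SimpleGraph V}

private lemma dist_lt_of_mem_support (r u x : V) (p : G.Walk r u)
    (hx : x ∈ p.support) (hne : x ≠ u) : G.dist r x < p.length := by
  classical
  have hspec := p.take_spec hx
  have hlen : (p.takeUntil x hx).length + (p.dropUntil x hx).length = p.length := by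
    rw [← SimpleGraph.Walk.length_append, hspec]
  have hdrop : (p.dropUntil x hx).length ≠ 0 := fun h0 =>
    hne (SimpleGraph.Walk.eq_of_length_eq_zero h0)
  have hd := SimpleGraph.dist_le (p.takeUntil x hx)
  omega

private lemma dist_adj_le (hconn : G.Connected) (r u w : V) (h : G.Adj u w) :
    G.dist r w ≤ G.dist r u + 1 := by
  obtain ⟨p, hp⟩ := hconn.exists_walk_length_eq_dist r u
  calc G.dist r w ≤ (p.concat h).length := SimpleGraph.dist_le _
    _ = p.length + 1 := SimpleGraph.Walk.length_concat _ _
    _ = G.dist r u + 1 := by rw [hp]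

private lemma concat_isPath {r u w : V} {p : G.Walk r u} (hp : p.IsPath)
    (h : G.Adj u w) (hw : w ∉ p.support) : (p.concat h).IsPath := by
  rw [← SimpleGraph.Walk.isPath_reverse_iff, SimpleGraph.Walk.reverse_concat]
  exact SimpleGraph.Walk.IsPath.cons hp.reverse
    (by rwa [SimpleGraph.Walk.support_reverse, List.mem_reverse])

private lemma dist_adj_ne (hconn : G.Connected) (hac : G.IsAcyclic) (r u w : V)
    (h : G.Adj u w) : G.dist r u ≠ G.dist r w := by
  intro heq
  obtain ⟨p, hp, hlen⟩ := hconn.exists_path_of_dist r u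
  have hw : w ∉ p.support := by
    intro hws
    have := dist_lt_of_mem_support r u w p hws h.ne'
    omega
  have hp2 : (p.concat h).IsPath := concat_isPath hp h hw
  obtain ⟨q, hq, hqlen⟩ := hconn.exists_path_of_dist r w
  have hu := hac.path_unique ⟨p.concat h, hp2⟩ ⟨q, hq⟩
  have hL : (p.concat h).length = q.length := by
    rw [Subtype.ext_iff] at hu
    simpa using congrArg SimpleGraph.Walk.length hu
  rw [SimpleGraph.Walk.length_concat] at hL
  omega

private lemma parent_unique (hconn : G.Connected) (hac : G.IsAcyclic) (r v u₁ u₂ : V)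
    (h1 : G.Adj v u₁) (h2 : G.Adj v u₂) (hd1 : G.dist r u₁ < G.dist r v)
    (hd2 : G.dist r u₂ < G.dist r v) : u₁ = u₂ := by
  by_contra hne
  have e1 : G.dist r v ≤ G.dist r u₁ + 1 := dist_adj_le hconn r u₁ v h1.symm
  have e2 : G.dist r v ≤ G.dist r u₂ + 1 := dist_adj_le hconn r u₂ v h2.symm
  obtain ⟨q1, hq1, hl1⟩ := hconn.exists_path_of_dist r u₁
  obtain ⟨q2, hq2, hl2⟩ := hconn.exists_path_of_dist r u₂
  have hv1 : v ∉ q1.support := by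
    intro hs
    have := dist_lt_of_mem_support r u₁ v q1 hs h1.ne
    omega
  have hv2 : v ∉ q2.support := by
    intro hs
    have := dist_lt_of_mem_support r u₂ v q2 hs h2.ne
    omega
  have hP1 : (q1.concat h1.symm).IsPath := concat_isPath hq1 h1.symm hv1
  have hP2 : (q2.concat h2.symm).IsPath := concat_isPath hq2 h2.symm hv2
  have heqP := hac.path_unique ⟨q1.concat h1.symm, hP1⟩ ⟨q2.concat h2.symm, hP2⟩
  rw [Subtype.ext_iff] at heqP
  have h₁ : u₁ ∈ (q1.concat h1.symm).support := by
    rw [SimpleGraph.Walk.support_concat, List.mem_append]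
    exact Or.inl (SimpleGraph.Walk.end_mem_support q1)
  have heqW : q1.concat h1.symm = q2.concat h2.symm := heqP
  rw [heqW, SimpleGraph.Walk.support_concat, List.mem_append,
    List.mem_singleton] at h₁
  rcases h₁ with hmem | hmem
  · have := dist_lt_of_mem_support r u₂ u₁ q2 hmem hne
    omega
  · exact h1.ne hmem.symm

end helpers

/-- In the 3-regular tree (connected, acyclic, every vertex of degree 3), every finite
nonempty set of vertices `S` satisfies `#∂S ≥ #S`, where `∂S` is the vertex boundary. -/
theorem stmt_0 {V : Type*} (G : SimpleGraph V)
    (hconn : G.Connected) (hacyclic : G.IsAcyclic)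
    (hreg : ∀ v : V, (G.neighborSet v).ncard = 3)
    (S : Set V) (hfin : S.Finite) (hne : S.Nonempty) :
    S.ncard ≤ {w : V | w ∉ S ∧ ∃ v ∈ S, G.Adj v w}.ncard := by
  classical
  have hnbf : ∀ v : V, (G.neighborSet v).Finite := by
    intro v
    by_contra h
    have h0 := Set.Infinite.ncard (s := G.neighborSet v) h
    rw [hreg v] at h0
    omega
  have hbdf : ∀ S : Set V, S.Finite → ({w : V | w ∉ S ∧ ∃ v ∈ S, G.Adj v w}).Finite := by
    intro S hS
    apply Set.Finite.subset (Set.Finite.biUnion hS (fun v _ => hnbf v))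
    rintro w ⟨-, v, hv, hadj⟩
    exact Set.mem_biUnion hv hadj
  have aux : ∀ (n : ℕ) (S : Set V), S.Finite → S.ncard = n + 1 →
      n + 1 ≤ {w : V | w ∉ S ∧ ∃ v ∈ S, G.Adj v w}.ncard := by
    intro n
    induction n with
    | zero =>
      intro S hS hcard
      obtain ⟨r, rfl⟩ := Set.ncard_eq_one.mp hcard
      have hsub : G.neighborSet r ⊆ {w : V | w ∉ ({r} : Set V) ∧ ∃ v ∈ ({r} : Set V), G.Adj v w} := by
        intro w hw
        exact ⟨by simpa using (G.ne_of_adj hw).symm, r, rfl, hw⟩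
      have hle := Set.ncard_le_ncard hsub (hbdf _ (Set.finite_singleton r))
      rw [hreg r] at hle
      omega
    | succ n ih =>
      intro S hS hcard
      have hSne : S.Nonempty := by
        rw [← Set.ncard_pos hS]; omega
      obtain ⟨r, hr⟩ := hSne
      obtain ⟨s, hsS, hsr⟩ := Set.exists_ne_of_one_lt_ncard (s := S) (by omega) r
      obtain ⟨v, hv, hmax⟩ := Set.exists_max_image S (fun x => G.dist r x) hS ⟨r, hr⟩
      set d := G.dist r v with hd
      have hdpos : 0 < d := lt_of_lt_of_le (hconn.pos_dist_of_ne (Ne.symm hsr)) (hmax s hsS)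
      -- at least two neighbors of v are "children" (strictly farther from r)
      set B := {u ∈ G.neighborSet v | d < G.dist r u} with hBdef
      have hBsub : B ⊆ G.neighborSet v := fun u hu => hu.1
      set P := {u ∈ G.neighborSet v | G.dist r u < d} with hPdef
      have hPsub : P ⊆ G.neighborSet v := fun u hu => hu.1
      have hsplit : G.neighborSet v ⊆ B ∪ P := by
        intro u hu
        rcases lt_or_ge d (G.dist r u) with h | h
        · exact Or.inl ⟨hu, h⟩
        · refine Or.inr ⟨hu, lt_of_le_of_ne h fun he => ?_⟩
          exact dist_adj_ne hconn hacyclic r u v ((G.mem_neighborSet v u).1 hu).symm he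
      have hP1 : P.ncard ≤ 1 := by
        have hPsing : P.Subsingleton := by
          rintro u₁ ⟨hu₁, hd₁⟩ u₂ ⟨hu₂, hd₂⟩
          exact parent_unique hconn hacyclic r v u₁ u₂ hu₁ hu₂ hd₁ hd₂
        rcases hPsing.eq_empty_or_singleton with h | ⟨x, h⟩
        · simp [h]
        · simp [h]
      have hB2 : 2 ≤ B.ncard := by
        have h1 := Set.ncard_le_ncard hsplit (((hnbf v).subset hBsub).union ((hnbf v).subset hPsub))
        have h2 := Set.ncard_union_le B P
        rw [hreg v] at h1
        omega
      obtain ⟨w₁, hw₁, w₂, hw₂, hww⟩ := (Set.one_lt_ncard ((hnbf v).subset hBsub)).mp (by omega)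
      have key : ∀ w ∈ B, G.Adj v w ∧ w ∉ S ∧ ∀ u ∈ S, G.Adj u w → u = v := by
        rintro w ⟨hwn, hwd⟩
        have hadj : G.Adj v w := hwn
        have hwle : G.dist r w ≤ d + 1 := dist_adj_le hconn r v w hadj
        refine ⟨hadj, fun hwS => absurd (hmax w hwS) (by omega), ?_⟩
        intro u huS huw
        have h1 : G.dist r u ≤ d := hmax u huS
        have h2 := dist_adj_le hconn r u w huw
        exact parent_unique hconn hacyclic r w u v huw.symm hadj.symm (by omega) (by omega)
      obtain ⟨hadj₁, hnS₁, honly₁⟩ := key w₁ hw₁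
      obtain ⟨hadj₂, hnS₂, honly₂⟩ := key w₂ hw₂
      -- inductive step with S' = S \ {v}
      have hS' : (S \ {v}).Finite := hS.diff
      have hcard' : (S \ {v}).ncard = n + 1 := by
        rw [Set.ncard_diff_singleton_of_mem hv, hcard]
        omega
      have IH := ih (S \ {v}) hS' hcard'
      set T := {w : V | w ∉ S ∧ ∃ x ∈ S, G.Adj x w} with hTdef
      set T' := {w : V | w ∉ S \ {v} ∧ ∃ x ∈ S \ {v}, G.Adj x w} with hT'def
      have hTfin : T.Finite := hbdf S hS
      have hT'fin : T'.Finite := hbdf _ hS'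
      have hsub1 : T' \ {v} ⊆ T := by
        rintro w ⟨⟨hwn, x, ⟨hxS, hxv⟩, hadj⟩, hwv⟩
        refine ⟨fun hwS => hwn ⟨hwS, by simpa using hwv⟩, x, hxS, hadj⟩
      have hmemT : ∀ w ∈ B, w ∉ S → (∀ u ∈ S, G.Adj u w → u = v) → G.Adj v w → w ∈ T ∧ w ∉ T' := by
        intro w hwB hwS honly hadj
        refine ⟨⟨hwS, v, hv, hadj⟩, ?_⟩
        rintro ⟨-, x, ⟨hxS, hxv⟩, hxadj⟩
        exact hxv (by simpa using honly x hxS hxadj)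
      obtain ⟨hT₁, hnT₁⟩ := hmemT w₁ hw₁ hnS₁ honly₁ hadj₁
      obtain ⟨hT₂, hnT₂⟩ := hmemT w₂ hw₂ hnS₂ honly₂ hadj₂
      have hsub : (T' \ {v}) ∪ {w₁, w₂} ⊆ T := by
        apply Set.union_subset hsub1
        rintro w (rfl | rfl)
        · exact hT₁
        · exact hT₂
      have hdisj : Disjoint (T' \ {v}) ({w₁, w₂} : Set V) := by
        rw [Set.disjoint_right]
        rintro w (rfl | rfl) hmem
        · exact hnT₁ hmem.1
        · exact hnT₂ hmem.1
      have hcount := Set.ncard_le_ncard hsub hTfin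
      rw [Set.ncard_union_eq hdisj hT'fin.diff (Set.toFinite _)] at hcount
      have hpair : ({w₁, w₂} : Set V).ncard = 2 := Set.ncard_pair hww
      have hpred := Set.pred_ncard_le_ncard_diff_singleton T' v
      omega
  have h1 : 0 < S.ncard := (Set.ncard_pos hfin).mpr hne
  have := aux (S.ncard - 1) S hfin (by omega)
  omega
end

section
/- Under the assumptions of the linear score representation γ_ξ(Ψ) = λE⁰[f(M_0', Φ)], with f(m', φ) continuous in m' for P⁰-almost all φ, the optimal intensity satisfies γ_{ξ,opt} = λ·E⁰[sup_{m'∈M'} f(m', Φ)]. -/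
open MeasureTheory

/-- Sup over a dense sequence equals sup over the whole space for a continuous
function with bounded-above range. -/
lemma dense_ciSup_eq {M' : Type*} [TopologicalSpace M'] [Nonempty M'] {D : ℕ → M'} (hD : DenseRange D)
    {g : M' → ℝ} (hg : Continuous g) (hb : BddAbove (Set.range g)) :
    (⨆ n, g (D n)) = ⨆ m, g m := by
  have hb' : BddAbove (Set.range fun n => g (D n)) :=
    hb.mono (Set.range_comp_subset_range D g)
  refine le_antisymm (ciSup_le fun n => le_ciSup hb (D n)) (ciSup_le fun m => ?_)
  set T := ⨆ n, g (D n) with hT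
  have himg : g '' Set.range D ⊆ Set.Iic T := by
    rintro x ⟨y, ⟨n, rfl⟩, rfl⟩
    exact le_ciSup hb' n
  have h1 : g m ∈ closure (g '' Set.range D) :=
    (image_closure_subset_closure_image hg) ⟨m, by rw [hD.closure_range]; trivial, rfl⟩
  have := (closure_mono himg) h1
  rwa [isClosed_Iic.closure_eq] at this

/-- Representation of the optimal intensity in the linear-score setting:
`γ_{ξ,opt} = sup over stationary markings of λ·E⁰[f(M₀', Φ)] = λ·E⁰[sup_{m'} f(m', Φ)]`,
where markings are represented by measurable mark choices `M : Ω → M'` on the Palm space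
and `f(m', φ)` is continuous in `m'` almost surely. -/
theorem stmt_5 {M' Conf : Type*}
    [TopologicalSpace M'] [MeasurableSpace M'] [PolishSpace M'] [BorelSpace M'] [Nonempty M']
    [MeasurableSpace Conf]
    {Ω : Type*} [MeasurableSpace Ω] (μ : Measure Ω) [IsProbabilityMeasure μ]
    (lam : ℝ) (hlam : 0 < lam)
    (Φ : Ω → Conf) (hΦ : Measurable Φ)
    (f : M' → Conf → ℝ)
    (hf : Measurable fun p : M' × Conf => f p.1 p.2)
    (hcont : ∀ᵐ ω ∂μ, Continuous fun m' => f m' (Φ ω))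
    (hbdd : ∀ᵐ ω ∂μ, BddAbove (Set.range fun m' => f m' (Φ ω)))
    (hint : ∀ M : Ω → M', Measurable M → Integrable (fun ω => f (M ω) (Φ ω)) μ)
    (hintsup : Integrable (fun ω => ⨆ m', f m' (Φ ω)) μ) :
    (⨆ M : {g : Ω → M' // Measurable g}, lam * ∫ ω, f (M.1 ω) (Φ ω) ∂μ)
      = lam * ∫ ω, ⨆ m', f m' (Φ ω) ∂μ := by
  classical
  have hneI : Nonempty {g : Ω → M' // Measurable g} :=
    ⟨⟨fun _ => Classical.arbitrary M', measurable_const⟩⟩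
  have hmeasf : ∀ (M : Ω → M'), Measurable M → Measurable (fun ω => f (M ω) (Φ ω)) :=
    fun M hM => hf.comp (hM.prodMk hΦ)
  have hle : ∀ M : {g : Ω → M' // Measurable g},
      ∫ ω, f (M.1 ω) (Φ ω) ∂μ ≤ ∫ ω, ⨆ m', f m' (Φ ω) ∂μ := by
    intro M
    refine integral_mono_ae (hint M.1 M.2) hintsup ?_
    filter_upwards [hbdd] with ω h using le_ciSup h (M.1 ω)
  have hBdd : BddAbove (Set.range fun M : {g : Ω → M' // Measurable g} =>
      lam * ∫ ω, f (M.1 ω) (Φ ω) ∂μ) := by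
    refine ⟨lam * ∫ ω, ⨆ m', f m' (Φ ω) ∂μ, ?_⟩
    rintro x ⟨M, rfl⟩
    exact mul_le_mul_of_nonneg_left (hle M) hlam.le
  refine le_antisymm (ciSup_le fun M => mul_le_mul_of_nonneg_left (hle M) hlam.le) ?_
  refine le_of_forall_pos_le_add fun ε hε => ?_
  set ε' : ℝ := ε / lam with hε'def
  have hε' : 0 < ε' := div_pos hε hlam
  -- dense sequence
  obtain ⟨D, hD⟩ : ∃ D : ℕ → M', DenseRange D :=
    ⟨TopologicalSpace.denseSeq M', TopologicalSpace.denseRange_denseSeq M'⟩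
  set S : Ω → ℝ := fun ω => ⨆ n, f (D n) (Φ ω) with hSdef
  have hmeasn : ∀ n : ℕ, Measurable fun ω => f (D n) (Φ ω) :=
    fun n => hf.comp (measurable_const.prodMk hΦ)
  have hS : Measurable S := Measurable.iSup hmeasn
  have hbdd' : ∀ᵐ ω ∂μ, BddAbove (Set.range fun n => f (D n) (Φ ω)) := by
    filter_upwards [hbdd] with ω h using
      h.mono (Set.range_comp_subset_range D fun m' => f m' (Φ ω))
  have hSeq : ∀ᵐ ω ∂μ, S ω = ⨆ m', f m' (Φ ω) := by
    filter_upwards [hcont, hbdd] with ω hc hb using dense_ciSup_eq hD hc hb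
  -- the selector
  set p : ℕ → Ω → Prop := fun n ω =>
    S ω - ε' < f (D n) (Φ ω) ∨ (n = 0 ∧ ∀ k, f (D k) (Φ ω) ≤ S ω - ε') with hpdef
  have hex : ∀ ω, ∃ n, p n ω := by
    intro ω
    by_cases h : ∃ n, S ω - ε' < f (D n) (Φ ω)
    · obtain ⟨n, hn⟩ := h; exact ⟨n, Or.inl hn⟩
    · push_neg at h; exact ⟨0, Or.inr ⟨rfl, h⟩⟩
  have hp : ∀ n, MeasurableSet {ω | p n ω} := by
    intro n
    have h1 : MeasurableSet {ω | S ω - ε' < f (D n) (Φ ω)} :=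
      measurableSet_lt (hS.sub measurable_const) (hmeasn n)
    have h2 : MeasurableSet {ω | n = 0 ∧ ∀ k, f (D k) (Φ ω) ≤ S ω - ε'} := by
      have : {ω | n = 0 ∧ ∀ k, f (D k) (Φ ω) ≤ S ω - ε'}
          = {ω | n = 0} ∩ ⋂ k, {ω | f (D k) (Φ ω) ≤ S ω - ε'} := by
        ext ω; simp [Set.mem_iInter]
      rw [this]
      exact (MeasurableSet.const _).inter
        (MeasurableSet.iInter fun k => measurableSet_le (hmeasn k) (hS.sub measurable_const))
    exact h1.union h2
  set M : Ω → M' := fun ω => D (Nat.find (hex ω)) with hMdef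
  have hM : Measurable M :=
    Measurable.find (f := fun n (_ : Ω) => D n) (fun n => measurable_const) hp hex
  have hMlb : ∀ᵐ ω ∂μ, S ω - ε' < f (M ω) (Φ ω) := by
    filter_upwards [hbdd'] with ω hb
    have hstrict : ∃ n, S ω - ε' < f (D n) (Φ ω) := by
      have hlt : S ω - ε' < S ω := by linarith
      exact exists_lt_of_lt_ciSup hlt
    have := Nat.find_spec (hex ω)
    rcases this with h | ⟨_, hall⟩
    · exact h
    · obtain ⟨n, hn⟩ := hstrict
      exact absurd (hall n) (not_le.mpr hn)
  -- integral bound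
  have hintM : Integrable (fun ω => f (M ω) (Φ ω)) μ := hint M hM
  have hintS : Integrable (fun ω => (⨆ m', f m' (Φ ω)) - ε') μ :=
    hintsup.sub (integrable_const ε')
  have hmono : ∫ ω, (⨆ m', f m' (Φ ω)) - ε' ∂μ ≤ ∫ ω, f (M ω) (Φ ω) ∂μ := by
    refine integral_mono_ae hintS hintM ?_
    filter_upwards [hMlb, hSeq] with ω h1 h2
    rw [← h2]; linarith
  have hsplit : ∫ ω, (⨆ m', f m' (Φ ω)) - ε' ∂μ
      = (∫ ω, ⨆ m', f m' (Φ ω) ∂μ) - ε' := by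
    rw [integral_sub hintsup (integrable_const ε'), integral_const]
    simp
  have hkey : lam * ∫ ω, ⨆ m', f m' (Φ ω) ∂μ ≤ lam * ∫ ω, f (M ω) (Φ ω) ∂μ + ε := by
    have h1 : (∫ ω, ⨆ m', f m' (Φ ω) ∂μ) - ε' ≤ ∫ ω, f (M ω) (Φ ω) ∂μ := by
      rw [← hsplit]; exact hmono
    have h2 : lam * ε' = ε := by rw [hε'def]; field_simp [hlam.ne']
    nlinarith [mul_le_mul_of_nonneg_left h1 hlam.le]
  refine hkey.trans (add_le_add_left (le_ciSup hBdd ⟨M, hM⟩) ε)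
end

section
/- In the linear-score setting, if an intensity-optimal stationary marking Ψ exists, then P⁰-almost surely f(M_0', Φ) = sup_{m'≥0} f(m', Φ); in particular argmax_{m'≥0} f(m', Φ) is nonempty P⁰-almost surely. Conversely, if argmax_{m'≥0} f(m', φ) ≠ ∅ for P⁰-almost all φ and f is continuous in m', then the factor marking M_i' := min argmax_{m'≥0} f(m', θ_{X_i}Φ) is intensity-optimal. -/
open MeasureTheory NNReal

lemma dense_ciSup {g : ℝ≥0 → ℝ} (hg : Continuous g) (hb : BddAbove (Set.range g))
    {D : Set ℝ≥0} (hD : Dense D) (hne : D.Nonempty) :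
    (⨆ q : D, g q) = ⨆ m', g m' := by
  have : Nonempty ↑D := hne.to_subtype
  have hDb : BddAbove (g '' D) := hb.mono (Set.image_subset_range _ _)
  refine le_antisymm (ciSup_le fun q => le_ciSup hb (q : ℝ≥0)) (ciSup_le fun m' => ?_)
  have h1 : g m' ∈ closure (g '' D) := by
    have : Set.range g ⊆ closure (g '' D) := by
      rw [← Set.image_univ, ← hD.closure_eq]
      exact (image_closure_subset_closure_image hg)
    exact this (Set.mem_range_self m')
  have h2 : sSup (g '' D) ∈ upperBounds (closure (g '' D)) := by
    rw [upperBounds_closure]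
    exact fun x hx => le_csSup hDb hx
  have h3 := h2 h1
  rwa [show sSup (g '' D) = ⨆ q : D, g q by rw [← sSup_image']] at h3

lemma argmax_csInf_mem {g : ℝ≥0 → ℝ} (hg : Continuous g)
    (hS : ∃ m', ∀ n', g n' ≤ g m') :
    sInf {m' | ∀ n', g n' ≤ g m'} ∈ {m' | ∀ n', g n' ≤ g m'} := by
  have hcl : IsClosed {m' : ℝ≥0 | ∀ n', g n' ≤ g m'} := by
    have : {m' : ℝ≥0 | ∀ n', g n' ≤ g m'} = ⋂ n', {m' | g n' ≤ g m'} := by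
      ext m'; simp [Set.mem_iInter]
    rw [this]
    exact isClosed_iInter fun n' => isClosed_le continuous_const hg
  exact hcl.csInf_mem hS (OrderBot.bddBelow _)

lemma argmax_val {g : ℝ≥0 → ℝ} (hg : Continuous g) (hb : BddAbove (Set.range g))
    (hS : ∃ m', ∀ n', g n' ≤ g m') :
    g (sInf {m' | ∀ n', g n' ≤ g m'}) = ⨆ m', g m' := by
  have hmem := argmax_csInf_mem hg hS
  exact le_antisymm (le_ciSup hb _) (ciSup_le fun n' => hmem n')

lemma argmax_csInf_le_iff {g : ℝ≥0 → ℝ} (hg : Continuous g) (hb : BddAbove (Set.range g))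
    (hS : ∃ m', ∀ n', g n' ≤ g m') {D : Set ℝ≥0} (hD : Dense D) (hne : D.Nonempty)
    (t : ℝ≥0) :
    sInf {m' | ∀ n', g n' ≤ g m'} ≤ t ↔ (⨆ q : D, g (min ↑q t)) = ⨆ q : D, g ↑q := by
  set g' : ℝ≥0 → ℝ := fun m => g (min m t) with hg'
  have hg'c : Continuous g' := hg.comp (continuous_id.min continuous_const)
  have hb' : BddAbove (Set.range g') :=
    hb.mono (Set.range_comp_subset_range (fun m => min m t) g)
  have e1 : (⨆ q : D, g (min ↑q t)) = ⨆ m, g' m := dense_ciSup hg'c hb' hD hne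
  have e2 : (⨆ q : D, g (↑q : ℝ≥0)) = ⨆ m, g m := dense_ciSup hg hb hD hne
  rw [e1, e2]
  constructor
  · intro h
    have hmem := argmax_csInf_mem hg hS
    set m₀ := sInf {m' | ∀ n', g n' ≤ g m'}
    refine le_antisymm (ciSup_le fun m => le_ciSup hb _) ?_
    have : g m₀ = g' m₀ := by simp [hg', min_eq_left h]
    calc ⨆ m, g m ≤ g m₀ := ciSup_le fun n' => hmem n'
      _ = g' m₀ := this
      _ ≤ ⨆ m, g' m := le_ciSup hb' m₀
  · intro h
    obtain ⟨m₀, hm₀t, hm₀⟩ := (isCompact_Icc : IsCompact (Set.Icc (0:ℝ≥0) t)).exists_isMaxOn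
      (Set.nonempty_Icc.2 (zero_le : (0:ℝ≥0) ≤ t)) hg.continuousOn
    have h1 : (⨆ m, g' m) ≤ g m₀ := ciSup_le fun m =>
      hm₀ (Set.mem_Icc.2 ⟨zero_le, min_le_right m t⟩)
    have h2 : ∀ n', g n' ≤ g m₀ := fun n' => by
      calc g n' ≤ ⨆ m, g m := le_ciSup hb n'
        _ = ⨆ m, g' m := h.symm
        _ ≤ g m₀ := h1
    exact (csInf_le (OrderBot.bddBelow _) (show m₀ ∈ {m' | ∀ n', g n' ≤ g m'} from h2)).trans hm₀t.2

/-- Existence criterion in the linear-score setting with `M' = [0,∞)`: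
(a) an intensity-optimal marking (a measurable `M : Ω → ℝ≥0` with
`E⁰[f(M, Φ)] = E⁰[sup_{m'} f(m', Φ)]`) exists iff `argmax_{m'≥0} f(m', Φ)` is nonempty
`P⁰`-a.s.; (b) every intensity-optimal marking satisfies `f(M₀', Φ) = sup_{m'} f(m', Φ)`
a.s.; (c) conversely, if the argmax is a.s. nonempty then the factor marking
`M := min argmax_{m'≥0} f(m', Φ)` is intensity-optimal. -/
theorem stmt_6 {Conf : Type*} [MeasurableSpace Conf]
    {Ω : Type*} [MeasurableSpace Ω] (μ : Measure Ω) [IsProbabilityMeasure μ]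
    (Φ : Ω → Conf) (hΦ : Measurable Φ)
    (f : ℝ≥0 → Conf → ℝ)
    (hf : Measurable fun p : ℝ≥0 × Conf => f p.1 p.2)
    (hcont : ∀ᵐ ω ∂μ, Continuous fun m' => f m' (Φ ω))
    (hbdd : ∀ᵐ ω ∂μ, BddAbove (Set.range fun m' => f m' (Φ ω)))
    (hint : ∀ M : Ω → ℝ≥0, Measurable M → Integrable (fun ω => f (M ω) (Φ ω)) μ)
    (hintsup : Integrable (fun ω => ⨆ m', f m' (Φ ω)) μ) :
    ((∃ M : Ω → ℝ≥0, Measurable M ∧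
        ∫ ω, f (M ω) (Φ ω) ∂μ = ∫ ω, ⨆ m', f m' (Φ ω) ∂μ)
      ↔ (∀ᵐ ω ∂μ, ∃ m' : ℝ≥0, ∀ n' : ℝ≥0, f n' (Φ ω) ≤ f m' (Φ ω)))
    ∧ (∀ M : Ω → ℝ≥0, Measurable M →
        ∫ ω, f (M ω) (Φ ω) ∂μ = ∫ ω, ⨆ m', f m' (Φ ω) ∂μ →
        ∀ᵐ ω ∂μ, f (M ω) (Φ ω) = ⨆ m', f m' (Φ ω))
    ∧ ((∀ᵐ ω ∂μ, ∃ m' : ℝ≥0, ∀ n' : ℝ≥0, f n' (Φ ω) ≤ f m' (Φ ω)) →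
        ∫ ω, f (sInf {m' : ℝ≥0 | ∀ n' : ℝ≥0, f n' (Φ ω) ≤ f m' (Φ ω)}) (Φ ω) ∂μ
          = ∫ ω, ⨆ m', f m' (Φ ω) ∂μ) := by
  obtain ⟨D, hDc, hDd⟩ := TopologicalSpace.exists_countable_dense ℝ≥0
  have hDne : D.Nonempty := hDd.nonempty
  haveI : Countable ↥D := hDc.to_subtype
  haveI : Nonempty ↥D := hDne.to_subtype
  -- measurability of slices
  have hslice : ∀ m' : ℝ≥0, Measurable fun ω => f m' (Φ ω) := fun m' =>
    hf.comp (measurable_const.prodMk hΦ)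
  -- part (b)
  have partb : ∀ M : Ω → ℝ≥0, Measurable M →
      ∫ ω, f (M ω) (Φ ω) ∂μ = ∫ ω, ⨆ m', f m' (Φ ω) ∂μ →
      ∀ᵐ ω ∂μ, f (M ω) (Φ ω) = ⨆ m', f m' (Φ ω) := by
    intro M hM hMeq
    have hInt : Integrable (fun ω => f (M ω) (Φ ω)) μ := hint M hM
    have hle : ∀ᵐ ω ∂μ, f (M ω) (Φ ω) ≤ ⨆ m', f m' (Φ ω) :=
      hbdd.mono fun ω hb => le_ciSup hb (M ω)
    have hzero : ∫ ω, ((⨆ m', f m' (Φ ω)) - f (M ω) (Φ ω)) ∂μ = 0 := by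
      rw [integral_sub hintsup hInt, hMeq, sub_self]
    have hnn : 0 ≤ᵐ[μ] fun ω => (⨆ m', f m' (Φ ω)) - f (M ω) (Φ ω) :=
      hle.mono fun ω h => by simpa using sub_nonneg.2 h
    have := (integral_eq_zero_iff_of_nonneg_ae hnn (hintsup.sub hInt)).1 hzero
    filter_upwards [this] with ω h0
    have : (⨆ m', f m' (Φ ω)) - f (M ω) (Φ ω) = 0 := h0
    linarith
  -- part (c)
  have partc : (∀ᵐ ω ∂μ, ∃ m' : ℝ≥0, ∀ n' : ℝ≥0, f n' (Φ ω) ≤ f m' (Φ ω)) →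
      ∫ ω, f (sInf {m' : ℝ≥0 | ∀ n' : ℝ≥0, f n' (Φ ω) ≤ f m' (Φ ω)}) (Φ ω) ∂μ
        = ∫ ω, ⨆ m', f m' (Φ ω) ∂μ := by
    intro hex
    apply integral_congr_ae
    filter_upwards [hcont, hbdd, hex] with ω hc hb he
    exact argmax_val hc hb he
  refine ⟨⟨?_, ?_⟩, partb, partc⟩
  · rintro ⟨M, hM, hMeq⟩
    filter_upwards [partb M hM hMeq, hbdd] with ω heq hb
    exact ⟨M ω, fun n' => (le_ciSup hb n').trans_eq heq.symm⟩
  · intro hex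
    -- the a.e. good property
    set P : Ω → Prop := fun ω => (Continuous fun m' => f m' (Φ ω)) ∧
        BddAbove (Set.range fun m' => f m' (Φ ω)) ∧
        ∃ m' : ℝ≥0, ∀ n' : ℝ≥0, f n' (Φ ω) ≤ f m' (Φ ω) with hP
    have haeP : ∀ᵐ ω ∂μ, P ω := by
      filter_upwards [hcont, hbdd, hex] with ω h1 h2 h3; exact ⟨h1, h2, h3⟩
    obtain ⟨T, hTsub, hTm, hT0⟩ :=
      exists_measurable_superset_of_null (ae_iff.1 haeP)
    set G : Set Ω := Tᶜ with hG
    have hGm : MeasurableSet G := hTm.compl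
    have hGP : ∀ ω ∈ G, P ω := fun ω hω => by
      by_contra hc; exact hω (hTsub hc)
    have hGae : ∀ᵐ ω ∂μ, ω ∈ G := by
      rw [ae_iff]
      simpa [hG] using hT0
    classical
    set M : Ω → ℝ≥0 := fun ω =>
      if ω ∈ G then sInf {m' : ℝ≥0 | ∀ n' : ℝ≥0, f n' (Φ ω) ≤ f m' (Φ ω)} else 0 with hMdef
    have hM : Measurable M := by
      apply measurable_of_Iic
      intro t
      have hset : M ⁻¹' Set.Iic t = Gᶜ ∪ (G ∩ {ω | (⨆ q : D, f (min ↑q t) (Φ ω))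
          = ⨆ q : D, f ↑q (Φ ω)}) := by
        ext ω
        by_cases hωG : ω ∈ G
        · obtain ⟨h1, h2, h3⟩ := hGP ω hωG
          simp only [Set.mem_preimage, Set.mem_Iic, hMdef, if_pos hωG, Set.mem_union,
            Set.mem_compl_iff, hωG, not_true, false_or, Set.mem_inter_iff, Set.mem_setOf_eq,
            true_and]
          exact argmax_csInf_le_iff h1 h2 h3 hDd hDne t
        · simp [hMdef, if_neg hωG, hωG]
      rw [hset]
      refine hGm.compl.union (hGm.inter ?_)
      have hu : Measurable fun ω => ⨆ q : D, f (min ↑q t) (Φ ω) :=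
        Measurable.iSup fun q => hslice (min ↑q t)
      have hv : Measurable fun ω => ⨆ q : D, f ↑q (Φ ω) :=
        Measurable.iSup fun q => hslice (↑q)
      exact measurableSet_eq_fun hu hv
    refine ⟨M, hM, ?_⟩
    apply integral_congr_ae
    filter_upwards [hcont, hbdd, hex, hGae] with ω hc hb he hωG
    rw [hMdef]
    simp only [if_pos hωG]
    exact argmax_val hc hb he
end
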